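/- arXiv:1909.10860 — 7 statements merged into one kernel-verified Lean document; each statement's English description precedes it below -/
import Mathlib

section
/- Let Λ ⊆ Γ ⊆ Λ₀ be rings such that Γ/Λ is finite and Γ is a minimal overring of Λ (there is no ring strictly between Λ and Γ). Then there exists a minimal nonzero (Λ,Λ)-subbimodule M of Γ/Λ such that the Λ-subalgebra of Λ₀ generated by Λ and a lift of M equals Γ. -/
/-- A `(Λ,Λ)`-subbimodule of `Λ₀`: an additive subgroup closed under left and right
multiplication by elements of the subring `Λ`. -/
def IsSubbimodule {Λ₀ : Type*} [Ring Λ₀] (Λ : Subring Λ₀) (M : Set Λ₀) : Prop :=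
  (0 : Λ₀) ∈ M ∧ (∀ x ∈ M, ∀ y ∈ M, x + y ∈ M) ∧ (∀ x ∈ M, -x ∈ M) ∧
    (∀ a ∈ Λ, ∀ x ∈ M, a * x ∈ M ∧ x * a ∈ M)

/-- Let `Λ ⊆ Γ ⊆ Λ₀` be rings such that `Λ₀/Λ` is finite and `Γ` is a
minimal overring of `Λ`.  Then there exists a minimal nonzero `(Λ,Λ)`-subbimodule
`M` of `Γ/Λ` (given here by its full preimage `M` in `Γ`, so `Λ ⊊ M ⊆ Γ` with `M`
minimal among such subbimodules) such that the subring of `Λ₀` generated by `Λ` and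
`M` equals `Γ`. -/
theorem statement3 {Λ₀ : Type*} [Ring Λ₀] (Λ Γ : Subring Λ₀)
    (hfin : Finite (Λ₀ ⧸ Λ.toAddSubgroup))
    (hlt : Λ < Γ)
    (hmin : ∀ Γ' : Subring Λ₀, Λ ≤ Γ' → Γ' ≤ Γ → Γ' = Λ ∨ Γ' = Γ) :
    ∃ M : Set Λ₀, IsSubbimodule Λ M ∧ (Λ : Set Λ₀) ⊂ M ∧ M ⊆ (Γ : Set Λ₀) ∧
      (∀ N : Set Λ₀, IsSubbimodule Λ N → (Λ : Set Λ₀) ⊂ N → N ⊆ M → N = M) ∧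
      Subring.closure M = Γ := by
  classical
  set q : Λ₀ → Λ₀ ⧸ Λ.toAddSubgroup := QuotientAddGroup.mk with hq
  set P : Set Λ₀ → Prop :=
    fun N => IsSubbimodule Λ N ∧ (Λ : Set Λ₀) ⊂ N ∧ N ⊆ (Γ : Set Λ₀) with hP
  -- saturation: a subbimodule properly containing Λ is a union of cosets of Λ
  have hsat : ∀ N : Set Λ₀, P N → q ⁻¹' (q '' N) = N := by
    intro N hN
    ext x
    constructor
    · rintro ⟨n, hn, hxn⟩
      have h1 : -n + x ∈ Λ.toAddSubgroup := (QuotientAddGroup.eq).mp hxn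
      have h2 : -n + x ∈ N := hN.2.1.1 h1
      have := hN.1.2.1 n hn _ h2
      simpa using this
    · intro hx
      exact ⟨x, hx, rfl⟩
  -- the set of images in the finite quotient
  set S : Set (Set (Λ₀ ⧸ Λ.toAddSubgroup)) := (fun N => q '' N) '' {N | P N} with hS
  have hΓsub : IsSubbimodule Λ (Γ : Set Λ₀) := by
    refine ⟨Γ.zero_mem, fun x hx y hy => Γ.add_mem hx hy, fun x hx => Γ.neg_mem hx,
      fun a ha x hx => ⟨Γ.mul_mem (hlt.le ha) hx, Γ.mul_mem hx (hlt.le ha)⟩⟩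
  have hΓP : P (Γ : Set Λ₀) := ⟨hΓsub, SetLike.coe_ssubset_coe.mpr hlt, le_rfl⟩
  have hSne : S.Nonempty := ⟨q '' (Γ : Set Λ₀), ⟨(Γ : Set Λ₀), hΓP, rfl⟩⟩
  -- pick a minimal element of S
  obtain ⟨A, hA, hAmin⟩ := (Finite.to_wellFoundedLT (α := Set (Λ₀ ⧸ Λ.toAddSubgroup))).wf.has_min S hSne
  obtain ⟨N, hNP, hNA⟩ := hA
  have hMN : q ⁻¹' A = N := by rw [← hNA]; exact hsat N hNP
  refine ⟨N, hNP.1, hNP.2.1, hNP.2.2, ?_, ?_⟩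
  · intro N' hN'1 hN'2 hN'3
    have hN'P : P N' := ⟨hN'1, hN'2, hN'3.trans hNP.2.2⟩
    have hsub : q '' N' ⊆ A := by rw [← hNA]; exact Set.image_mono hN'3
    have : q '' N' = A := by
      by_contra hne
      exact hAmin (q '' N') ⟨N', hN'P, rfl⟩ (lt_of_le_of_ne hsub hne)
    calc N' = q ⁻¹' (q '' N') := (hsat N' hN'P).symm
      _ = q ⁻¹' A := by rw [this]
      _ = N := hMN
  · -- the closure of N is an intermediate ring, hence Γ
    have hle : Subring.closure N ≤ Γ := Subring.closure_le.mpr hNP.2.2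
    have hge : Λ ≤ Subring.closure N :=
      fun x hx => Subring.subset_closure (hNP.2.1.1 hx)
    rcases hmin (Subring.closure N) hge hle with h | h
    · exfalso
      obtain ⟨x, hxN, hxΛ⟩ := Set.exists_of_ssubset hNP.2.1
      exact hxΛ (h ▸ Subring.subset_closure hxN)
    · exact h
end

section
/- Let R be a Dedekind domain with fraction field K, A a semisimple K-algebra, and Λ an R-order of A. Every minimal overorder Γ of Λ with [Γ : Λ] a power of the prime 𝔭 satisfies Γ ⊆ 𝔭⁻¹Λ. -/
/-- An `R`-order of the `K`-algebra `A`: a subring of `A` (closed under the `R`-action)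
that is a finitely generated projective `R`-module and contains a `K`-basis of `A`. -/
def IsOrder {R A : Type*} (K : Type*) [CommRing R] [Field K] [Algebra R K] [Ring A]
    [Algebra K A] [Algebra R A] [IsScalarTower R K A] (Λ : Subalgebra R A) : Prop :=
  Module.Finite R Λ ∧ Module.Projective R Λ ∧ Submodule.span K (Λ : Set A) = ⊤

lemma locTF {R M : Type*} [CommRing R] [IsDomain R]
    [AddCommGroup M] [Module R M] [NoZeroSMulDivisors R M] (I : Ideal R) [I.IsPrime] :
    NoZeroSMulDivisors (Localization.AtPrime I) (LocalizedModule I.primeCompl M) := by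
  constructor
  intro c x h
  obtain ⟨r, s, rfl⟩ := IsLocalization.exists_mk'_eq I.primeCompl c
  induction x using LocalizedModule.induction_on with
  | h m t =>
    rw [← Localization.mk_eq_mk'_apply, LocalizedModule.mk_smul_mk, ← LocalizedModule.zero_mk (1 : I.primeCompl),
      LocalizedModule.mk_eq] at h
    obtain ⟨u, hu⟩ := h
    simp only [smul_zero, one_smul] at hu
    rcases eq_or_ne r 0 with rfl | hr
    · left
      rw [IsLocalization.mk'_eq_zero_iff]
      exact ⟨1, by simp⟩
    · right
      have hu' : ((u : R) * r) • m = 0 := by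
        rw [mul_smul]; exact_mod_cast hu
      have hur : (u : R) * r ≠ 0 := mul_ne_zero (fun h0 => u.2 (h0 ▸ I.zero_mem)) hr
      have : m = 0 := (smul_eq_zero.mp hu').resolve_left hur
      rw [this, ← LocalizedModule.zero_mk t]

lemma projOfTF {R M : Type*} [CommRing R] [IsDedekindDomain R]
    [AddCommGroup M] [Module R M] [Module.Finite R M] [NoZeroSMulDivisors R M] :
    Module.Projective R M := by
  haveI := Module.finitePresentation_of_finite R M
  apply Module.projective_of_localization_maximal
  intro I hI
  haveI : IsPrincipalIdealRing (Localization.AtPrime I) := by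
    by_cases hp : I = ⊥
    · subst hp; infer_instance
    · have := (IsDedekindDomain.isDedekindDomainDvr R).is_dvr_at_nonzero_prime I hp inferInstance
      infer_instance
  haveI : Module.Finite (Localization.AtPrime I) (LocalizedModule I.primeCompl M) :=
    Module.Finite.of_isLocalizedModule I.primeCompl (LocalizedModule.mkLinearMap I.primeCompl M)
  haveI := locTF (M := M) I
  haveI : Module.Free (Localization.AtPrime I) (LocalizedModule I.primeCompl M) :=
    Module.free_of_finite_type_torsion_free'
  infer_instance


theorem statement7' {R K A : Type*} [CommRing R] [IsDedekindDomain R] [Field K]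
    [Algebra R K] [IsFractionRing R K] [Ring A] [Algebra K A] [Algebra R A]
    [IsScalarTower R K A] [FiniteDimensional K A] [IsSemisimpleRing A]
    (Λ Γ : Subalgebra R A)
    (hΛ : Module.Finite R Λ ∧ Module.Projective R Λ ∧ Submodule.span K (Λ : Set A) = ⊤)
    (hΓ : Module.Finite R Γ ∧ Module.Projective R Γ ∧ Submodule.span K (Γ : Set A) = ⊤)
    (hlt : Λ < Γ)
    (hmin : ∀ Λ' : Subalgebra R A,
      (Module.Finite R Λ' ∧ Module.Projective R Λ' ∧ Submodule.span K (Λ' : Set A) = ⊤) →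
      Λ ≤ Λ' → Λ' ≤ Γ → Λ' = Λ ∨ Λ' = Γ)
    (𝔭 : Ideal R) (h𝔭 : 𝔭.IsPrime) (h𝔭0 : 𝔭 ≠ ⊥)
    (hpow : ∀ x ∈ Γ, ∃ k : ℕ, ∀ a ∈ 𝔭 ^ k, a • x ∈ Λ) :
    ∀ x ∈ Γ, ∀ a ∈ 𝔭, a • x ∈ Λ := by
  classical
  -- torsion-freeness of A over R
  haveI hA : NoZeroSMulDivisors R A := by
    refine ⟨fun {c x} h => ?_⟩
    rcases eq_or_ne c 0 with rfl | hc
    · exact Or.inl rfl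
    right
    have h1 : algebraMap R K c • x = 0 := by rw [algebraMap_smul]; exact h
    have hc' : algebraMap R K c ≠ 0 := fun h0 =>
      hc (IsFractionRing.injective R K (by simpa using h0))
    simpa [hc'] using smul_eq_zero.mp h1
  set tΓ : Submodule R A := Subalgebra.toSubmodule Γ with htΓ
  set tΛ : Submodule R A := Subalgebra.toSubmodule Λ with htΛ
  set N : Submodule R A := tΛ ⊔ 𝔭 • tΓ with hNdef
  have hΛΓ : tΛ ≤ tΓ := hlt.le
  have hPle : 𝔭 • tΓ ≤ tΓ := Submodule.smul_le_right
  have hNle : N ≤ tΓ := sup_le hΛΓ hPle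
  -- closure of 𝔭 • tΓ under multiplication by elements of Γ
  have lmul : ∀ g ∈ tΓ, ∀ y ∈ 𝔭 • tΓ, g * y ∈ 𝔭 • tΓ := by
    intro g hg y hy
    refine Submodule.smul_induction_on hy ?_ ?_
    · intro a ha m hm
      rw [mul_smul_comm]
      exact Submodule.smul_mem_smul ha (show g * m ∈ tΓ from Γ.mul_mem hg hm)
    · intro y z hy hz
      rw [mul_add]; exact add_mem hy hz
  have rmul : ∀ g ∈ tΓ, ∀ y ∈ 𝔭 • tΓ, y * g ∈ 𝔭 • tΓ := by
    intro g hg y hy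
    refine Submodule.smul_induction_on hy ?_ ?_
    · intro a ha m hm
      rw [smul_mul_assoc]
      exact Submodule.smul_mem_smul ha (show m * g ∈ tΓ from Γ.mul_mem hm hg)
    · intro y z hy hz
      rw [add_mul]; exact add_mem hy hz
  have key : ∀ y ∈ N, ∀ z ∈ N, y * z ∈ N := by
    intro y hy z hz
    obtain ⟨l, hl, p, hp, rfl⟩ := Submodule.mem_sup.mp hy
    obtain ⟨l', hl', p', hp', rfl⟩ := Submodule.mem_sup.mp hz
    have h1 : l * l' ∈ N := le_sup_left (α := Submodule R A) (show l * l' ∈ tΛ from Λ.mul_mem hl hl')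
    have h2 : l * p' ∈ N := le_sup_right (α := Submodule R A) (lmul l (hΛΓ hl) p' hp')
    have h3 : p * l' ∈ N := le_sup_right (α := Submodule R A) (rmul l' (hΛΓ hl') p hp)
    have h4 : p * p' ∈ N := le_sup_right (α := Submodule R A) (rmul p' (hPle hp') p hp)
    rw [add_mul, mul_add, mul_add]
    exact N.add_mem (N.add_mem h1 h2) (N.add_mem h3 h4)
  let Λ' : Subalgebra R A :=
  { carrier := N
    mul_mem' := fun {a b} ha hb => key a ha b hb
    add_mem' := fun {a b} ha hb => N.add_mem ha hb
    one_mem' := le_sup_left (α := Submodule R A) (show (1 : A) ∈ tΛ from Λ.one_mem)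
    zero_mem' := N.zero_mem
    algebraMap_mem' := fun r =>
      le_sup_left (α := Submodule R A) (show algebraMap R A r ∈ tΛ from Λ.algebraMap_mem r) }
  have hΛ'N : Subalgebra.toSubmodule Λ' = N := rfl
  -- finiteness
  have hΓfg : tΓ.FG := Module.Finite.iff_fg.mp hΓ.1
  haveI : Module.Finite R tΓ := Module.Finite.iff_fg.mpr hΓfg
  have hNfg : N.FG := by
    haveI : IsNoetherian R tΓ := isNoetherian_of_isNoetherianRing_of_finite R tΓ
    have := IsNoetherian.noetherian (N.comap tΓ.subtype)
    have hmap := this.map tΓ.subtype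
    rwa [Submodule.map_comap_subtype, inf_eq_right.mpr hNle] at hmap
  haveI hfinΛ' : Module.Finite R Λ' := Module.Finite.iff_fg.mpr hNfg
  haveI : NoZeroSMulDivisors R Λ' := by
    refine ⟨fun {c x} h => ?_⟩
    have : c • (x : A) = 0 := congrArg Subtype.val h
    rcases smul_eq_zero.mp this with h' | h'
    · exact Or.inl h'
    · exact Or.inr (Subtype.ext h')
  have hΛ'proj : Module.Projective R Λ' := projOfTF
  have hΛ'span : Submodule.span K (Λ' : Set A) = ⊤ := by
    rw [eq_top_iff, ← hΛ.2.2]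
    exact Submodule.span_mono (fun y hy => le_sup_left (α := Submodule R A) hy)
  have hle1 : Λ ≤ Λ' := fun y hy => le_sup_left (α := Submodule R A) hy
  have hle2 : Λ' ≤ Γ := fun y hy => hNle hy
  rcases hmin Λ' ⟨hfinΛ', hΛ'proj, hΛ'span⟩ hle1 hle2 with hcase | hcase
  · -- Λ' = Λ : done
    intro x hx a ha
    have : a • x ∈ 𝔭 • tΓ := Submodule.smul_mem_smul ha hx
    have : a • x ∈ Λ' := le_sup_right (α := Submodule R A) this
    rwa [hcase] at this
  · -- Λ' = Γ : contradiction
    exfalso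
    have hEq : tΓ = tΛ ⊔ 𝔭 • tΓ := by
      calc tΓ = Subalgebra.toSubmodule Λ' := by rw [hcase]
        _ = tΛ ⊔ 𝔭 • tΓ := hΛ'N
    -- uniform bound
    have hbound : ∃ n : ℕ, 𝔭 ^ n • tΓ ≤ tΛ := by
      obtain ⟨s, hs⟩ := hΓfg
      have hsub : ∀ y ∈ s, y ∈ Γ := by
        intro y hy
        have h : y ∈ Submodule.span R (s : Set A) := Submodule.subset_span hy
        rw [hs] at h
        exact h
      choose f hf using fun (y : s) => hpow y (hsub y y.2)
      refine ⟨s.attach.sup f, ?_⟩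
      refine Submodule.smul_le.mpr fun b hb y hy => ?_
      rw [← hs] at hy
      have hgen : (s : Set A) ⊆ (tΛ.comap (LinearMap.lsmul R A b) : Set A) := by
        intro g hg
        have hble : 𝔭 ^ s.attach.sup f ≤ 𝔭 ^ f ⟨g, hg⟩ :=
          Ideal.pow_le_pow_right (Finset.le_sup (Finset.mem_attach s ⟨g, hg⟩))
        exact hf ⟨g, hg⟩ b (hble hb)
      have := Submodule.span_le.mpr hgen
      exact this hy
    obtain ⟨n, hn⟩ := hbound
    have hiter : ∀ m : ℕ, tΓ ≤ tΛ ⊔ 𝔭 ^ (m + 1) • tΓ := by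
      intro m
      induction m with
      | zero => rw [pow_one]; exact hEq.le
      | succ m ih =>
        refine ih.trans (sup_le le_sup_left ?_)
        calc 𝔭 ^ (m + 1) • tΓ = 𝔭 ^ (m + 1) • (tΛ ⊔ 𝔭 • tΓ) := by rw [← hEq]
          _ = 𝔭 ^ (m + 1) • tΛ ⊔ 𝔭 ^ (m + 1) • 𝔭 • tΓ := Submodule.smul_sup _ _ _
          _ ≤ tΛ ⊔ 𝔭 ^ (m + 2) • tΓ := by
              refine sup_le_sup Submodule.smul_le_right (le_of_eq ?_)
              rw [← Submodule.smul_assoc, smul_eq_mul, ← pow_succ]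
    have : tΓ ≤ tΛ := by
      refine (hiter n).trans (sup_le le_rfl ?_)
      calc 𝔭 ^ (n + 1) • tΓ = 𝔭 ^ n • (𝔭 • tΓ) := by
            rw [← Submodule.smul_assoc, smul_eq_mul, ← pow_succ]
        _ ≤ 𝔭 ^ n • tΓ := smul_mono_right _ hPle
        _ ≤ tΛ := hn
    exact hlt.not_ge this

/-- Let `R` be a Dedekind domain with fraction field `K`, `A` a
semisimple `K`-algebra and `Λ` an `R`-order of `A`.  Every minimal overorder `Γ` of
`Λ` whose index ideal `[Γ : Λ]` is a power of the nonzero prime `𝔭` (i.e. `Γ/Λ` is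
`𝔭`-power torsion) satisfies `Γ ⊆ 𝔭⁻¹Λ = {x ∈ A | 𝔭x ⊆ Λ}`. -/
theorem statement7 {R K A : Type*} [CommRing R] [IsDedekindDomain R] [Field K]
    [Algebra R K] [IsFractionRing R K] [Ring A] [Algebra K A] [Algebra R A]
    [IsScalarTower R K A] [FiniteDimensional K A] [IsSemisimpleRing A]
    (Λ Γ : Subalgebra R A) (hΛ : IsOrder K Λ) (hΓ : IsOrder K Γ) (hlt : Λ < Γ)
    (hmin : ∀ Λ' : Subalgebra R A, IsOrder K Λ' → Λ ≤ Λ' → Λ' ≤ Γ → Λ' = Λ ∨ Λ' = Γ)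
    (𝔭 : Ideal R) (h𝔭 : 𝔭.IsPrime) (h𝔭0 : 𝔭 ≠ ⊥)
    (hpow : ∀ x ∈ Γ, ∃ k : ℕ, ∀ a ∈ 𝔭 ^ k, a • x ∈ Λ) :
    ∀ x ∈ Γ, ∀ a ∈ 𝔭, a • x ∈ Λ := by
  exact statement7' Λ Γ hΛ hΓ hlt hmin 𝔭 h𝔭 h𝔭0 hpow
end

section
/- Let Λ ⊊ Γ be a minimal extension of orders of an étale K-algebra A. Then the conductor (Λ : Γ) is a prime (maximal) ideal 𝔓 of Λ, and Γ ⊆ (𝔓 : 𝔓). Moreover, if 𝔭 = 𝔓 ∩ R, then 𝔭 is the unique prime ideal of R dividing the index ideal [Γ : Λ]. -/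
set_option maxHeartbeats 1000000
set_option synthInstance.maxHeartbeats 400000

/-- A single element of the `K`-span of `Λ` admits a denominator in `R`. -/
private lemma statement11_exists_den {R K A : Type*} [CommRing R] [IsDomain R] [Field K]
    [Algebra R K] [IsFractionRing R K] [CommRing A] [Algebra K A] [Algebra R A]
    [IsScalarTower R K A] (Λ : Subalgebra R A) {x : A}
    (hx : x ∈ Submodule.span K (Λ : Set A)) : ∃ r : R, r ≠ 0 ∧ r • x ∈ Λ := by
  induction hx using Submodule.span_induction with
  | mem y hy => exact ⟨1, one_ne_zero, by simpa using hy⟩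
  | zero => exact ⟨1, one_ne_zero, by simpa using zero_mem Λ⟩
  | add y z _ _ hy hz =>
      obtain ⟨r, hr, hry⟩ := hy
      obtain ⟨s, hs, hsz⟩ := hz
      refine ⟨r * s, mul_ne_zero hr hs, ?_⟩
      rw [smul_add]
      exact add_mem (by rw [mul_comm, mul_smul]; exact Subalgebra.smul_mem _ hry s)
        (by rw [mul_smul]; exact Subalgebra.smul_mem _ hsz r)
  | smul k y _ hy =>
      obtain ⟨r, hr, hry⟩ := hy
      obtain ⟨⟨a, b⟩, hab⟩ := IsLocalization.surj (nonZeroDivisors R) k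
      refine ⟨(b : R) * r, mul_ne_zero (nonZeroDivisors.ne_zero b.2) hr, ?_⟩
      have h1 : (algebraMap R K ((b : R) * r)) * k = algebraMap R K a * algebraMap R K r := by
        rw [map_mul]
        linear_combination (algebraMap R K r) * hab
      have h2 : ((b : R) * r) • (k • y) = a • (r • y) := by
        calc ((b : R) * r) • (k • y)
            = (algebraMap R K ((b : R) * r)) • (k • y) := (algebraMap_smul K _ _).symm
          _ = ((algebraMap R K ((b : R) * r)) * k) • y := (mul_smul _ _ _).symm
          _ = (algebraMap R K a * algebraMap R K r) • y := by rw [h1]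
          _ = (algebraMap R K a) • ((algebraMap R K r) • y) := mul_smul _ _ _
          _ = a • (r • y) := by rw [algebraMap_smul, algebraMap_smul]
      rw [h2]
      exact Subalgebra.smul_mem _ hry a

/-- A common denominator for all of `Γ`. -/
private lemma statement11_exists_den_all {R K A : Type*} [CommRing R] [IsDomain R] [Field K]
    [Algebra R K] [IsFractionRing R K] [CommRing A] [Algebra K A] [Algebra R A]
    [IsScalarTower R K A] (Λ Γ : Subalgebra R A) (hΓfin : Module.Finite R Γ)
    (hΛspan : Submodule.span K (Λ : Set A) = ⊤) :
    ∃ r : R, r ≠ 0 ∧ ∀ g ∈ Γ, r • g ∈ Λ := by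
  classical
  have hfg : (Subalgebra.toSubmodule Γ).FG := Module.Finite.iff_fg.mp hΓfin
  obtain ⟨s, hs⟩ := hfg
  have h : ∀ x : A, ∃ r : R, r ≠ 0 ∧ r • x ∈ Λ := fun x =>
    statement11_exists_den Λ (by rw [hΛspan]; trivial)
  choose f hf0 hf using h
  refine ⟨∏ x ∈ s, f x, Finset.prod_ne_zero_iff.mpr fun x _ => hf0 x, ?_⟩
  intro g hg
  have hg' : g ∈ Subalgebra.toSubmodule Γ := hg
  rw [← hs] at hg'
  clear hg
  induction hg' using Submodule.span_induction with
  | mem y hy =>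
      rw [← Finset.mul_prod_erase s f (Finset.mem_coe.mp hy), mul_comm, mul_smul]
      exact Subalgebra.smul_mem _ (hf y) _
  | zero => simpa using zero_mem Λ
  | add y z _ _ hy hz => rw [smul_add]; exact add_mem hy hz
  | smul c y _ hy => rw [smul_comm]; exact Subalgebra.smul_mem _ hy c

/-- Let `Λ ⊊ Γ` be a minimal extension of orders of an étale
`K`-algebra `A`.  Then the conductor `(Λ : Γ)` is a maximal ideal `𝔓` of `Λ`, we
have `Γ ⊆ (𝔓 : 𝔓)`, and `𝔭 = 𝔓 ∩ R` is the unique nonzero prime ideal of `R`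
dividing the index ideal `[Γ : Λ]` (a nonzero prime `𝔮` divides `[Γ : Λ]` iff the
`𝔮`-primary part of `Γ/Λ` is nonzero, i.e. there is `x ∈ Γ \ Λ` with `𝔮ᵏx ⊆ Λ`
for some `k`). -/
theorem statement11 {R : Type*} {K A : Type u} [CommRing R] [IsDedekindDomain R] [Field K]
    [Algebra R K] [IsFractionRing R K] [CommRing A] [Algebra K A] [Algebra R A]
    [IsScalarTower R K A] [FiniteDimensional K A] [Algebra.Etale K A]
    (hresfin : ∀ I : Ideal R, I ≠ ⊥ → Finite (R ⧸ I))
    (Λ Γ : Subalgebra R A)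
    (hΛfin : Module.Finite R Λ) (hΛspan : Submodule.span K (Λ : Set A) = ⊤)
    (hΓfin : Module.Finite R Γ) (hΓspan : Submodule.span K (Γ : Set A) = ⊤)
    (hlt : Λ < Γ)
    (hmin : ∀ Λ' : Subalgebra R A,
      (Module.Finite R Λ' ∧ Submodule.span K (Λ' : Set A) = ⊤) →
      Λ ≤ Λ' → Λ' ≤ Γ → Λ' = Λ ∨ Λ' = Γ) :
    ∃ 𝔓 : Ideal Λ, 𝔓.IsMaximal ∧
      ({x : A | ∀ g ∈ Γ, x * g ∈ Λ} = Subtype.val '' (𝔓 : Set Λ)) ∧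
      (∀ x ∈ Γ, ∀ p : Λ, p ∈ 𝔓 → x * (p : A) ∈ Subtype.val '' (𝔓 : Set Λ)) ∧
      (Ideal.comap (algebraMap R Λ) 𝔓 ≠ ⊥) ∧
      (∃ x ∈ Γ, x ∉ Λ ∧ ∃ k : ℕ,
        ∀ a ∈ (Ideal.comap (algebraMap R Λ) 𝔓) ^ k, a • x ∈ Λ) ∧
      (∀ 𝔮 : Ideal R, 𝔮.IsPrime → 𝔮 ≠ ⊥ →
        (∃ x ∈ Γ, x ∉ Λ ∧ ∃ k : ℕ, ∀ a ∈ 𝔮 ^ k, a • x ∈ Λ) →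
        𝔮 = Ideal.comap (algebraMap R Λ) 𝔓) := by
  classical
  have hΛΓ : Λ ≤ Γ := le_of_lt hlt
  -- common denominator
  obtain ⟨r, hr0, hr⟩ := statement11_exists_den_all Λ Γ hΓfin hΛspan
  -- the conductor as an ideal of Λ
  let C : Ideal Λ :=
    { carrier := {p : Λ | ∀ g ∈ Γ, (p : A) * g ∈ Λ}
      add_mem' := fun {p q} hp hq g hg => by
        push_cast [add_mul]
        exact add_mem (hp g hg) (hq g hg)
      zero_mem' := fun g hg => by simpa using Subalgebra.zero_mem Λ
      smul_mem' := fun c p hp g hg => by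
        have : ((c • p : Λ) : A) * g = (c : A) * ((p : A) * g) := by
          rw [smul_eq_mul]; push_cast; ring
        rw [this]
        exact mul_mem c.2 (hp g hg) }
  have hmemC : ∀ p : Λ, p ∈ C ↔ ∀ g ∈ Γ, (p : A) * g ∈ Λ := fun p => Iff.rfl
  -- r lands in the conductor
  have hrC : algebraMap R Λ r ∈ C := by
    intro g hg
    have : ((algebraMap R Λ r : Λ) : A) * g = r • g := by
      rw [Subalgebra.coe_algebraMap, Algebra.smul_def]
    rw [this]
    exact hr g hg
  -- the conductor is not the whole ring
  have hCne : C ≠ ⊤ := by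
    intro h
    obtain ⟨x, hxΓ, hxΛ⟩ := SetLike.exists_of_lt hlt
    have h1 : (1 : Λ) ∈ C := h ▸ Submodule.mem_top
    have := h1 x hxΓ
    rw [Subalgebra.coe_one, one_mul] at this
    exact hxΛ this
  -- primality of the conductor
  have hCprime : C.IsPrime := by
    refine ⟨hCne, ?_⟩
    intro a b hab
    by_cases hb : b ∈ C
    · exact Or.inr hb
    · left
      -- the intermediate order Λ + bΓ
      have hbΓ : (b : A) ∈ Γ := hΛΓ b.2
      let M : Subalgebra R A :=
        { carrier := {x : A | ∃ l ∈ Λ, ∃ g ∈ Γ, x = l + (b : A) * g}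
          mul_mem' := by
            rintro x y ⟨l, hl, g, hg, rfl⟩ ⟨l', hl', g', hg', rfl⟩
            exact ⟨l * l', mul_mem hl hl',
              l * g' + g * l' + g * ((b : A) * g'),
              add_mem (add_mem (mul_mem (hΛΓ hl) hg') (mul_mem hg (hΛΓ hl')))
                (mul_mem hg (mul_mem hbΓ hg')), by ring⟩
          one_mem' := ⟨1, one_mem Λ, 0, zero_mem Γ, by ring⟩
          add_mem' := by
            rintro x y ⟨l, hl, g, hg, rfl⟩ ⟨l', hl', g', hg', rfl⟩
            exact ⟨l + l', add_mem hl hl', g + g', add_mem hg hg', by ring⟩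
          zero_mem' := ⟨0, zero_mem Λ, 0, zero_mem Γ, by ring⟩
          algebraMap_mem' := fun c =>
            ⟨algebraMap R A c, Subalgebra.algebraMap_mem Λ c, 0, zero_mem Γ, by ring⟩ }
      have hΛM : Λ ≤ M := fun x hx => ⟨x, hx, 0, zero_mem Γ, by ring⟩
      have hMΓ : M ≤ Γ := by
        rintro x ⟨l, hl, g, hg, rfl⟩
        exact add_mem (hΛΓ hl) (mul_mem hbΓ hg)
      -- M is a finite module
      have hfgΓ : (Subalgebra.toSubmodule Γ).FG := Module.Finite.iff_fg.mp hΓfin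
      haveI := isNoetherian_of_fg_of_noetherian (Subalgebra.toSubmodule Γ) hfgΓ
      have hMfg : (Subalgebra.toSubmodule M).FG := by
        have h1 : Subalgebra.toSubmodule M ≤ Subalgebra.toSubmodule Γ := hMΓ
        have h2 := (IsNoetherian.noetherian
          (Submodule.comap (Subalgebra.toSubmodule Γ).subtype (Subalgebra.toSubmodule M))).map
          (Subalgebra.toSubmodule Γ).subtype
        rwa [Submodule.map_comap_subtype, inf_eq_right.mpr h1] at h2
      have hMfin : Module.Finite R M := Module.Finite.iff_fg.mpr hMfg
      have hMspan : Submodule.span K (M : Set A) = ⊤ :=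
        top_unique (hΛspan ▸ Submodule.span_mono hΛM)
      rcases hmin M ⟨hMfin, hMspan⟩ hΛM hMΓ with hM | hM
      · -- M = Λ contradicts b ∉ C
        exfalso
        apply hb
        intro g hg
        have : (b : A) * g ∈ M := ⟨0, zero_mem Λ, g, hg, by ring⟩
        rw [hM] at this
        exact this
      · -- M = Γ gives a ∈ C
        intro g hg
        rw [← hM] at hg
        obtain ⟨l, hl, g', hg', rfl⟩ := hg
        have h1 : (a : A) * (l + (b : A) * g') =
            (a : A) * l + ((a * b : Λ) : A) * g' := by push_cast; ring
        rw [h1]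
        exact add_mem (mul_mem a.2 hl) (hab g' hg')
  -- maximality via finiteness of Λ ⧸ C
  have hCmax : C.IsMaximal := by
    haveI := hCprime
    haveI := hΛfin
    have hIne : Ideal.span {r} ≠ (⊥ : Ideal R) := by
      simpa [Ideal.span_singleton_eq_bot] using hr0
    haveI : Finite (R ⧸ Ideal.span {r}) := hresfin _ hIne
    have hle : Ideal.span {r} ≤ Ideal.comap (algebraMap R Λ) C := by
      rw [Ideal.span_le, Set.singleton_subset_iff]
      exact hrC
    letI : Algebra (R ⧸ Ideal.span {r}) (Λ ⧸ C) :=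
      Ideal.Quotient.algebraQuotientOfLEComap hle
    haveI : IsScalarTower R (R ⧸ Ideal.span {r}) (Λ ⧸ C) :=
      IsScalarTower.of_algebraMap_eq (fun x => rfl)
    haveI : Module.Finite R (Λ ⧸ C) :=
      Module.Finite.of_surjective (Ideal.Quotient.mkₐ R C).toLinearMap
        (Ideal.Quotient.mkₐ_surjective R C)
    haveI : Module.Finite (R ⧸ Ideal.span {r}) (Λ ⧸ C) :=
      Module.Finite.of_restrictScalars_finite R _ _
    haveI : Finite (Λ ⧸ C) := Module.finite_of_finite (R ⧸ Ideal.span {r})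
    exact Ideal.Quotient.maximal_of_isField C (Finite.isField_of_domain _)
  -- the contracted ideal
  have hrcomap : r ∈ Ideal.comap (algebraMap R Λ) C := hrC
  have hcomap_ne : Ideal.comap (algebraMap R Λ) C ≠ ⊥ := by
    intro h
    rw [h] at hrcomap
    exact hr0 (Ideal.mem_bot.mp hrcomap)
  -- membership of 𝔭 kills Γ mod Λ
  have hpkill : ∀ a ∈ Ideal.comap (algebraMap R Λ) C, ∀ x ∈ Γ, a • x ∈ Λ := by
    intro a ha x hx
    have := ha x hx
    rw [Subalgebra.coe_algebraMap] at this
    rwa [Algebra.smul_def]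
  refine ⟨C, hCmax, ?_, ?_, hcomap_ne, ?_, ?_⟩
  · -- set description of the conductor
    ext x
    constructor
    · intro hx
      have hxΛ : x ∈ Λ := by
        have := hx 1 (one_mem Γ)
        rwa [mul_one] at this
      exact ⟨⟨x, hxΛ⟩, hx, rfl⟩
    · rintro ⟨p, hp, rfl⟩
      exact hp
  · -- Γ ⊆ (𝔓 : 𝔓)
    intro x hx p hp
    have hxpΛ : x * (p : A) ∈ Λ := by
      rw [mul_comm]
      exact hp x hx
    refine ⟨⟨x * (p : A), hxpΛ⟩, ?_, rfl⟩
    intro g hg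
    have : (x * (p : A)) * g = (p : A) * (x * g) := by ring
    rw [this]
    exact hp _ (mul_mem hx hg)
  · -- existence of x ∈ Γ \ Λ killed by 𝔭
    obtain ⟨x, hxΓ, hxΛ⟩ := SetLike.exists_of_lt hlt
    refine ⟨x, hxΓ, hxΛ, 1, ?_⟩
    intro a ha
    rw [pow_one] at ha
    exact hpkill a ha x hxΓ
  · -- uniqueness
    intro 𝔮 hq hq0 ⟨x, hxΓ, hxΛ, k, hk⟩
    set 𝔭 := Ideal.comap (algebraMap R Λ) C with h𝔭
    haveI := hCprime
    haveI h𝔭p : 𝔭.IsPrime := Ideal.IsPrime.comap (algebraMap R Λ)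
    have h𝔭max : 𝔭.IsMaximal := h𝔭p.isMaximal hcomap_ne
    have h𝔮max : 𝔮.IsMaximal := hq.isMaximal hq0
    by_contra hne
    have hcop : IsCoprime 𝔭 (𝔮 ^ k) :=
      (Ideal.isCoprime_iff_sup_eq.mpr
        (Ideal.IsMaximal.coprime_of_ne h𝔭max h𝔮max (Ne.symm hne))).pow_right
    have hsup : 𝔭 ⊔ 𝔮 ^ k = ⊤ := Ideal.isCoprime_iff_sup_eq.mp hcop
    have h1 : (1 : R) ∈ 𝔭 ⊔ 𝔮 ^ k := hsup ▸ Submodule.mem_top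
    obtain ⟨c, hc, d, hd, hcd⟩ := Submodule.mem_sup.mp h1
    apply hxΛ
    have : x = c • x + d • x := by
      rw [← add_smul, hcd, one_smul]
    rw [this]
    exact add_mem (hpkill c hc x hxΓ) (hk d hd)
end

section
/- Let Λ be an order in an étale algebra, 𝔓 a maximal ideal of Λ with residue field of cardinality q. A one-dimensional Λ/𝔓-subspace V = ⟨x⟩ of the Λ/𝔓-vector space (𝔓 : 𝔓)/Λ corresponds to an order (i.e., its preimage in (𝔓 : 𝔓) is multiplicatively closed) if and only if x² ∈ V. -/
/-- The preimage in `A` of the line `⟨x⟩` in `(𝔓 : 𝔓)/Λ`: the `Λ`-module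
`Λ·x + Λ`. -/
def lineOver {R A : Type*} [CommRing R] [CommRing A] [Algebra R A]
    (Λ : Subalgebra R A) (x : A) : Set A :=
  {y : A | ∃ a l : Λ, y = (a : A) * x + (l : A)}

/-- Let `Λ` be an order in an étale algebra and `𝔓` a maximal ideal
of `Λ`.  A one-dimensional `Λ/𝔓`-subspace `V = ⟨x⟩` of `(𝔓 : 𝔓)/Λ` corresponds to
an order — i.e. its preimage `M = Λ + Λx` in `(𝔓 : 𝔓)` is multiplicatively closed —
if and only if `x² ∈ V` (i.e. `x * x ∈ M`). -/
theorem statement13 {R : Type*} {K A : Type u} [CommRing R] [IsDedekindDomain R] [Field K]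
    [Algebra R K] [IsFractionRing R K] [CommRing A] [Algebra K A] [Algebra R A]
    [IsScalarTower R K A] [FiniteDimensional K A] [Algebra.Etale K A]
    (Λ : Subalgebra R A)
    (hfin : Module.Finite R Λ) (hspan : Submodule.span K (Λ : Set A) = ⊤)
    (𝔓 : Ideal Λ) (hmax : 𝔓.IsMaximal)
    (x : A) (hx : ∀ p : Λ, p ∈ 𝔓 → ∃ q : Λ, q ∈ 𝔓 ∧ x * (p : A) = (q : A))
    (hxΛ : x ∉ Λ) :
    (∀ y ∈ lineOver Λ x, ∀ z ∈ lineOver Λ x, y * z ∈ lineOver Λ x) ↔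
      x * x ∈ lineOver Λ x := by
  constructor
  · intro h
    have hxmem : x ∈ lineOver Λ x := ⟨1, 0, by simp⟩
    exact h x hxmem x hxmem
  · rintro ⟨a, l, hal⟩ y ⟨a₁, l₁, rfl⟩ z ⟨a₂, l₂, rfl⟩
    exact ⟨a₁ * a₂ * a + a₁ * l₂ + a₂ * l₁, a₁ * a₂ * l + l₁ * l₂, by
      push_cast; linear_combination (a₁ : A) * (a₂ : A) * hal⟩
end

section
/- Let Λ be an R-order of an étale K-algebra A and 𝔓₁,…,𝔓ᵣ pairwise coprime ideals of Λ. Then for each i, (𝔓ᵢ : 𝔓ᵢ) ∩ Σ_{j≠i} (𝔓ⱼ : 𝔓ⱼ) = Λ, where all colon sets are taken inside A. -/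
/-- The colon set `(I : I) = {a ∈ A | aI ⊆ I}` of an ideal `I` of the subalgebra
`Λ`, taken inside `A`. -/
def colonSet {R A : Type*} [CommRing R] [CommRing A] [Algebra R A]
    (Λ : Subalgebra R A) (I : Ideal Λ) : Set A :=
  {a : A | ∀ p : Λ, p ∈ I → ∃ q : Λ, q ∈ I ∧ a * (p : A) = (q : A)}

lemma mem_colonSet_of_mem {R A : Type*} [CommRing R] [CommRing A] [Algebra R A]
    (Λ : Subalgebra R A) (I : Ideal Λ) {a : A} (ha : a ∈ Λ) : a ∈ colonSet Λ I := by
  intro p hp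
  exact ⟨⟨a, ha⟩ * p, I.mul_mem_left _ hp, rfl⟩

lemma zero_mem_colonSet {R A : Type*} [CommRing R] [CommRing A] [Algebra R A]
    (Λ : Subalgebra R A) (I : Ideal Λ) : (0 : A) ∈ colonSet Λ I := by
  intro p hp
  exact ⟨0, I.zero_mem, by simp⟩

lemma prod_add_sub_prod_mem {Λ : Type*} [CommRing Λ] (I : Ideal Λ) {ι : Type*} (s : Finset ι)
    (x y : ι → Λ) (hx : ∀ j ∈ s, x j ∈ I) :
    (∏ j ∈ s, (x j + y j)) - ∏ j ∈ s, y j ∈ I := by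
  classical
  induction s using Finset.induction_on with
  | empty => simp
  | @insert a s ha ih =>
    rw [Finset.prod_insert ha, Finset.prod_insert ha]
    have h1 : x a ∈ I := hx a (Finset.mem_insert_self a s)
    have h2 := ih (fun j hj => hx j (Finset.mem_insert_of_mem hj))
    have heq : (x a + y a) * ∏ j ∈ s, (x j + y j) - y a * ∏ j ∈ s, y j
        = x a * ∏ j ∈ s, (x j + y j) + y a * ((∏ j ∈ s, (x j + y j)) - ∏ j ∈ s, y j) := by
      ring
    rw [heq]
    exact I.add_mem (I.mul_mem_right _ h1) (I.mul_mem_left _ h2)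

/-- Let `Λ` be an `R`-order of an étale `K`-algebra `A` and
`𝔓 1, …, 𝔓 r` (with `r ≥ 2`) pairwise coprime ideals of `Λ`.  Then for each `i`,
`(𝔓ᵢ : 𝔓ᵢ) ∩ Σ_{j ≠ i} (𝔓ⱼ : 𝔓ⱼ) = Λ`. -/
theorem statement15 {R : Type*} {K A : Type u} [CommRing R] [IsDedekindDomain R] [Field K]
    [Algebra R K] [IsFractionRing R K] [CommRing A] [Algebra K A] [Algebra R A]
    [IsScalarTower R K A] [FiniteDimensional K A] [Algebra.Etale K A]
    (Λ : Subalgebra R A)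
    (hfin : Module.Finite R Λ) (hspan : Submodule.span K (Λ : Set A) = ⊤)
    {r : ℕ} (hr : 2 ≤ r) (𝔓 : Fin r → Ideal Λ)
    (hcop : ∀ i j, i ≠ j → 𝔓 i ⊔ 𝔓 j = ⊤) (i : Fin r) :
    {a : A | a ∈ colonSet Λ (𝔓 i) ∧
        ∃ f : Fin r → A, (∀ j, j ≠ i → f j ∈ colonSet Λ (𝔓 j)) ∧ f i = 0 ∧
          a = ∑ j, f j} = (Λ : Set A) := by
  classical
  ext a
  simp only [Set.mem_setOf_eq, SetLike.mem_coe]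
  constructor
  · rintro ⟨ha, f, hf, hfi, hsum⟩
    have hchoice : ∀ j : Fin r, j ≠ i → ∃ z : Λ × Λ, z.1 ∈ 𝔓 i ∧ z.2 ∈ 𝔓 j ∧ z.1 + z.2 = 1 := by
      intro j hj
      have h1 : (1 : Λ) ∈ 𝔓 i ⊔ 𝔓 j := by
        rw [hcop i j (Ne.symm hj)]; trivial
      obtain ⟨u, hu, v, hv, huv⟩ := Submodule.mem_sup.mp h1
      exact ⟨(u, v), hu, hv, huv⟩
    choose! z hz1 hz2 hz3 using hchoice
    set E := Finset.univ.erase i with hE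
    set Y : Λ := ∏ j ∈ E, (z j).2 with hY
    have hYmem : ∀ k, k ≠ i → Y ∈ 𝔓 k := by
      intro k hk
      have hkE : k ∈ E := Finset.mem_erase.mpr ⟨hk, Finset.mem_univ k⟩
      rw [hY, ← Finset.prod_erase_mul E _ hkE]
      exact Ideal.mul_mem_left _ _ (hz2 k hk)
    have hZ : (1 : Λ) - Y ∈ 𝔓 i := by
      have h1 : (∏ j ∈ E, ((z j).1 + (z j).2)) = 1 := by
        rw [Finset.prod_congr rfl (fun j hj => hz3 j (Finset.mem_erase.mp hj).1)]
        simp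
      have := prod_add_sub_prod_mem (𝔓 i) E (fun j => (z j).1) (fun j => (z j).2)
        (fun j hj => hz1 j (Finset.mem_erase.mp hj).1)
      rwa [h1] at this
    obtain ⟨q, hq, haq⟩ := ha (1 - Y) hZ
    have key : a = a * (((1 : Λ) - Y : Λ) : A) + ∑ j, f j * ((Y : Λ) : A) := by
      rw [← Finset.sum_mul, ← hsum]
      push_cast
      ring
    rw [key, haq]
    refine Λ.add_mem q.2 (sum_mem fun j _ => ?_)
    by_cases hji : j = i
    · subst hji
      rw [hfi, zero_mul]
      exact Λ.zero_mem
    · obtain ⟨q', hq', h⟩ := hf j hji Y (hYmem j hji)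
      rw [h]
      exact q'.2
  · intro haΛ
    have : Nontrivial (Fin r) := Fin.nontrivial_iff_two_le.mpr hr
    obtain ⟨j₀, hj₀⟩ := exists_ne i
    refine ⟨mem_colonSet_of_mem Λ _ haΛ, fun j => if j = j₀ then a else 0, ?_, ?_, ?_⟩
    · intro j hj
      by_cases h : j = j₀
      · simp only [h, if_pos rfl]
        exact mem_colonSet_of_mem Λ _ haΛ
      · simp only [if_neg h]
        exact zero_mem_colonSet Λ _
    · show (if i = j₀ then a else 0) = 0
      exact if_neg (fun h => hj₀ h.symm)
    · rw [Finset.sum_ite_eq' Finset.univ j₀ (fun _ => a)]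
      simp
end

section
/- Let Λ ⊆ Γ be an extension of orders of an étale algebra with Γ/Λ finite, and 𝔓 a prime of Λ. Then the conductor (Λ : Γ) is a 𝔓-primary ideal of Λ if and only if the Λ-module Γ/Λ is 𝔓-primary (i.e., its only associated prime is 𝔓). -/
/-- The conductor `(Λ : Γ) ∩ Λ` as an ideal of `Λ`: elements `a ∈ Λ` with
`aΓ ⊆ Λ`.  (Since `(Λ : Γ) ⊆ Λ` when `Λ ≤ Γ` and `1 ∈ Γ`, this is the usual
conductor.) -/
def conductorIdeal {R A : Type*} [CommRing R] [CommRing A] [Algebra R A]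
    (Λ Γ : Subalgebra R A) : Ideal Λ where
  carrier := {a : Λ | ∀ g ∈ Γ, (a : A) * g ∈ Λ}
  zero_mem' := by
    intro g hg
    simpa using Λ.zero_mem
  add_mem' := by
    intro a b ha hb g hg
    have := Λ.add_mem (ha g hg) (hb g hg)
    push_cast
    rw [add_mul]
    exact this
  smul_mem' := by
    intro c a ha g hg
    have h1 : ((c • a : Λ) : A) * g = (c : A) * ((a : A) * g) := by
      show ((c * a : Λ) : A) * g = _; push_cast; ring
    rw [h1]
    exact Λ.mul_mem c.2 (ha g hg)

/-- The annihilator in `Λ` of the class of `x` in `A/Λ`: elements `a ∈ Λ` with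
`a·x ∈ Λ`. -/
def annMod {R A : Type*} [CommRing R] [CommRing A] [Algebra R A]
    (Λ : Subalgebra R A) (x : A) : Ideal Λ where
  carrier := {a : Λ | (a : A) * x ∈ Λ}
  zero_mem' := by
    simpa using Λ.zero_mem
  add_mem' := by
    intro a b ha hb
    have := Λ.add_mem ha hb
    show ((a + b : Λ) : A) * x ∈ Λ
    push_cast
    rw [add_mul]
    exact this
  smul_mem' := by
    intro c a ha
    have h1 : ((c • a : Λ) : A) * x = (c : A) * ((a : A) * x) := by
      show ((c * a : Λ) : A) * x = _; push_cast; ring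
    show ((c • a : Λ) : A) * x ∈ Λ
    rw [h1]
    exact Λ.mul_mem c.2 ha

section Aux

variable {R A : Type*} [CommRing R] [CommRing A] [Algebra R A]

lemma mem_annMod {Λ : Subalgebra R A} {x : A} {a : Λ} :
    a ∈ annMod Λ x ↔ (a : A) * x ∈ Λ := Iff.rfl

lemma mem_conductorIdeal {Λ Γ : Subalgebra R A} {a : Λ} :
    a ∈ conductorIdeal Λ Γ ↔ ∀ g ∈ Γ, (a : A) * g ∈ Λ := Iff.rfl

lemma annMod_ne_top {Λ : Subalgebra R A} {x : A} (hx : x ∉ Λ) :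
    annMod Λ x ≠ ⊤ := by
  intro h
  have h1 : (1 : Λ) ∈ annMod Λ x := h ▸ Submodule.mem_top
  rw [mem_annMod] at h1
  exact hx (by simpa using h1)

/-- If `y` multiplies generators of `Γ` into `Λ`, it multiplies everything in. -/
lemma mul_mem_of_forall_gen {Λ Γ : Subalgebra R A} (y : A) (t : Finset Γ)
    (ht : Submodule.span R (t : Set Γ) = ⊤)
    (h : ∀ g ∈ t, y * (g : A) ∈ Λ) : ∀ g ∈ Γ, y * g ∈ Λ := by
  have key : ∀ γ : Γ, γ ∈ Submodule.span R (t : Set Γ) → y * (γ : A) ∈ Λ := by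
    intro γ hγ
    induction hγ using Submodule.span_induction with
    | mem x hx => exact h x hx
    | zero => simpa using Λ.zero_mem
    | add x z hx hz hx' hz' =>
        have : y * ((↑(x + z) : A)) = y * (x : A) + y * (z : A) := by
          push_cast; ring
        rw [this]; exact Λ.add_mem hx' hz'
    | smul r x hx hx' =>
        have : y * ((↑(r • x) : A)) = r • (y * (x : A)) := by
          have hc : ((r • x : Γ) : A) = r • (x : A) := rfl
          rw [hc, mul_smul_comm]
        rw [this]; exact Λ.smul_mem hx' r
  intro g hg
  exact key ⟨g, hg⟩ (ht ▸ Submodule.mem_top)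

end Aux

/-- Let `Λ ⊆ Γ` be an extension of orders of an étale algebra with
`Γ/Λ` finite (torsion over `R`), and `𝔓` a prime of `Λ`.  Then the conductor
`(Λ : Γ)` is a `𝔓`-primary ideal of `Λ` if and only if the `Λ`-module `Γ/Λ` is
`𝔓`-primary, i.e. its only associated prime (annihilator of a nonzero element that
is prime) is `𝔓`. -/
theorem statement17 {R : Type*} {K A : Type u} [CommRing R] [IsDedekindDomain R]
    [Field K] [Algebra R K] [IsFractionRing R K] [CommRing A] [Algebra K A]
    [Algebra R A] [IsScalarTower R K A] [FiniteDimensional K A] [Algebra.Etale K A]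
    (hresfin : ∀ I : Ideal R, I ≠ ⊥ → Finite (R ⧸ I))
    (Λ Γ : Subalgebra R A)
    (hΛfin : Module.Finite R Λ) (hΛspan : Submodule.span K (Λ : Set A) = ⊤)
    (hΓfin : Module.Finite R Γ) (hΓspan : Submodule.span K (Γ : Set A) = ⊤)
    (hle : Λ ≤ Γ)
    (htor : ∀ x ∈ Γ, ∃ c : R, c ≠ 0 ∧ c • x ∈ Λ)
    (𝔓 : Ideal Λ) (hP : 𝔓.IsPrime) :
    ((conductorIdeal Λ Γ).IsPrimary ∧ (conductorIdeal Λ Γ).radical = 𝔓) ↔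
      ((∃ x ∈ Γ, x ∉ Λ ∧ annMod Λ x = 𝔓) ∧
        (∀ x ∈ Γ, x ∉ Λ → (annMod Λ x).IsPrime → annMod Λ x = 𝔓)) := by
  classical
  haveI := hΛfin
  haveI := hΓfin
  have hIle : ∀ x ∈ Γ, conductorIdeal Λ Γ ≤ annMod Λ x := fun x hx a ha => ha x hx
  -- every nonempty family of ideals of Λ has a maximal element
  have hmaxfam : ∀ s : Set (Ideal Λ), s.Nonempty →
      ∃ J ∈ s, ∀ J' ∈ s, J ≤ J' → J' = J := by
    intro s hs
    obtain ⟨N, hNs, hNmax⟩ := set_has_maximal_iff_noetherian.mpr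
      (inferInstance : IsNoetherian R Λ)
      ((fun J : Ideal Λ => J.restrictScalars R) '' s) (hs.image _)
    obtain ⟨J, hJ, rfl⟩ := hNs
    refine ⟨J, hJ, ?_⟩
    intro J' hJ' hle'
    by_contra hne
    refine hNmax (J'.restrictScalars R) ⟨J', hJ', rfl⟩ ?_
    refine lt_of_le_of_ne (fun x hx => hle' hx) ?_
    intro h
    exact hne (Submodule.restrictScalars_injective R Λ Λ h).symm
  -- monotone chains of ideals stabilize
  have hstab : ∀ f : ℕ →o Ideal Λ, ∃ n, ∀ m, n ≤ m → f n = f m := by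
    intro f
    obtain ⟨n, hn⟩ := monotone_stabilizes_iff_noetherian.mpr
      (inferInstance : IsNoetherian R Λ)
      ⟨fun k => (f k).restrictScalars R, fun i j hij x hx => f.monotone hij hx⟩
    exact ⟨n, fun m hm => Submodule.restrictScalars_injective R Λ Λ (hn m hm)⟩
  -- maximal annihilators are prime
  have hprime : ∀ z ∈ Γ, z ∉ Λ →
      ∃ b : Λ, (b : A) * z ∉ Λ ∧ (annMod Λ ((b : A) * z)).IsPrime := by
    intro z hzΓ hzΛ
    have hne : ({J | ∃ b : Λ, (b : A) * z ∉ Λ ∧ J = annMod Λ ((b : A) * z)} :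
        Set (Ideal Λ)).Nonempty := by
      refine ⟨annMod Λ ((↑(1 : Λ) : A) * z), 1, ?_, rfl⟩
      simpa using hzΛ
    obtain ⟨J, ⟨b₀, hb₀, rfl⟩, hJmax⟩ := hmaxfam _ hne
    refine ⟨b₀, hb₀, ?_⟩
    rw [Ideal.isPrime_iff]
    refine ⟨annMod_ne_top hb₀, ?_⟩
    intro α β hαβ
    by_cases hβ : β ∈ annMod Λ ((b₀ : A) * z)
    · exact Or.inr hβ
    · left
      have hβb : ((↑(β * b₀) : A) * z) ∉ Λ := by
        intro h
        apply hβ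
        rw [mem_annMod]
        have he : (↑(β * b₀) : A) * z = (β : A) * ((b₀ : A) * z) := by push_cast; ring
        rwa [he] at h
      have hle2 : annMod Λ ((b₀ : A) * z) ≤ annMod Λ ((↑(β * b₀) : A) * z) := by
        intro γ hγ
        rw [mem_annMod] at hγ ⊢
        have he : (γ : A) * ((↑(β * b₀) : A) * z)
            = (β : A) * ((γ : A) * ((b₀ : A) * z)) := by push_cast; ring
        rw [he]
        exact Λ.mul_mem β.2 hγ
      have heq := hJmax _ ⟨β * b₀, hβb, rfl⟩ hle2
      rw [← heq, mem_annMod]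
      have he : (α : A) * ((↑(β * b₀) : A) * z)
          = (↑(α * β) : A) * ((b₀ : A) * z) := by push_cast; ring
      rw [he]
      exact hαβ
  -- a nonzero torsion exponent for the whole of Γ
  obtain ⟨c, hc0, hcI⟩ : ∃ c : R, c ≠ 0 ∧ algebraMap R Λ c ∈ conductorIdeal Λ Γ := by
    obtain ⟨t, ht⟩ := Module.finite_def.mp hΓfin
    choose cg hcg0 hcgmem using fun g : Γ => htor (g : A) g.2
    refine ⟨t.prod cg, Finset.prod_ne_zero_iff.mpr fun g _ => hcg0 g, ?_⟩
    rw [mem_conductorIdeal]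
    have h : ∀ g ∈ t, (algebraMap R A (t.prod cg)) * (g : A) ∈ Λ := by
      intro g hg
      rw [← Algebra.smul_def, ← Finset.mul_prod_erase t cg hg, mul_comm, mul_smul]
      exact Λ.smul_mem (hcgmem g) _
    intro g hg
    have := mul_mem_of_forall_gen (algebraMap R A (t.prod cg)) t ht h g hg
    simpa using this
  -- primes containing the conductor are maximal
  have hmaximal : ∀ 𝔮 : Ideal Λ, 𝔮.IsPrime → algebraMap R Λ c ∈ 𝔮 → 𝔮.IsMaximal := by
    intro 𝔮 hq hcq
    haveI := hq
    haveI : Algebra.IsIntegral R Λ := Algebra.IsIntegral.of_finite R Λ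
    apply Ideal.isMaximal_of_isIntegral_of_isMaximal_comap (R := R)
    apply Ideal.IsPrime.isMaximal (Ideal.IsPrime.comap _)
    intro h
    have hcmem : c ∈ 𝔮.comap (algebraMap R Λ) := Ideal.mem_comap.mpr hcq
    rw [h] at hcmem
    exact hc0 (Ideal.mem_bot.mp hcmem)
  constructor
  · rintro ⟨hprim, hrad⟩
    have hInetop : conductorIdeal Λ Γ ≠ ⊤ := (Ideal.isPrimary_iff.mp hprim).1
    have hPmax : 𝔓.IsMaximal :=
      hmaximal 𝔓 hP (hrad ▸ Ideal.le_radical hcI)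
    have huniq : ∀ x ∈ Γ, x ∉ Λ → (annMod Λ x).IsPrime → annMod Λ x = 𝔓 := by
      intro x hxΓ hxΛ hq
      have h1 : 𝔓 ≤ annMod Λ x := by
        rw [← hrad, ← hq.radical]
        exact Ideal.radical_mono (hIle x hxΓ)
      exact (hPmax.eq_of_le (annMod_ne_top hxΛ) h1).symm
    refine ⟨?_, huniq⟩
    have hex : ∃ z ∈ Γ, z ∉ Λ := by
      by_contra h
      push_neg at h
      apply hInetop
      rw [Ideal.eq_top_iff_one, mem_conductorIdeal]
      intro g hg
      simpa using h g hg
    obtain ⟨z, hzΓ, hzΛ⟩ := hex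
    obtain ⟨b, hbz, hbprime⟩ := hprime z hzΓ hzΛ
    have hbzΓ : (b : A) * z ∈ Γ := Γ.mul_mem (hle b.2) hzΓ
    exact ⟨(b : A) * z, hbzΓ, hbz, huniq _ hbzΓ hbz hbprime⟩
  · rintro ⟨⟨x₀, hx₀Γ, hx₀Λ, hx₀ann⟩, huniq⟩
    have hIle𝔓 : conductorIdeal Λ Γ ≤ 𝔓 := hx₀ann ▸ hIle x₀ hx₀Γ
    have hInetop : conductorIdeal Λ Γ ≠ ⊤ := by
      intro h
      exact hP.ne_top (top_le_iff.mp (h ▸ hIle𝔓))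
    -- 𝔓 is contained in the radical of the conductor
    have hrad_ge : 𝔓 ≤ (conductorIdeal Λ Γ).radical := by
      intro a ha
      -- elementwise nilpotence modulo Λ
      have key : ∀ x : Γ, ∃ n : ℕ, ((a : A) ^ n) * (x : A) ∈ Λ := by
        intro x
        by_contra hcon
        push_neg at hcon
        have hmono : ∀ n, annMod Λ ((a : A) ^ n * (x : A))
            ≤ annMod Λ ((a : A) ^ (n + 1) * (x : A)) := by
          intro n γ hγ
          rw [mem_annMod] at hγ ⊢
          have he : (γ : A) * ((a : A) ^ (n + 1) * (x : A))
              = (a : A) * ((γ : A) * ((a : A) ^ n * (x : A))) := by ring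
          rw [he]
          exact Λ.mul_mem a.2 hγ
        obtain ⟨N, hN⟩ := hstab
          ⟨fun n => annMod Λ ((a : A) ^ n * (x : A)), monotone_nat_of_le_succ hmono⟩
        set z : A := (a : A) ^ N * (x : A) with hzdef
        have hzΓ : z ∈ Γ := Γ.mul_mem (pow_mem (hle a.2) N) x.2
        have hzΛ : z ∉ Λ := hcon N
        obtain ⟨b, hbz, hbprime⟩ := hprime z hzΓ hzΛ
        have hbzΓ : (b : A) * z ∈ Γ := Γ.mul_mem (hle b.2) hzΓ
        have heq := huniq _ hbzΓ hbz hbprime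
        have ha' : a ∈ annMod Λ ((b : A) * z) := heq ▸ ha
        rw [mem_annMod] at ha'
        have hb' : b ∈ annMod Λ ((a : A) ^ (N + 1) * (x : A)) := by
          rw [mem_annMod]
          have he : (b : A) * ((a : A) ^ (N + 1) * (x : A))
              = (a : A) * ((b : A) * z) := by rw [hzdef]; ring
          rw [he]
          exact ha'
        have hstep : annMod Λ ((a : A) ^ N * (x : A))
            = annMod Λ ((a : A) ^ (N + 1) * (x : A)) :=
          hN (N + 1) (Nat.le_succ N)
        rw [← hstep] at hb'
        exact hbz hb'
      -- uniform exponent via generators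
      obtain ⟨t, ht⟩ := Module.finite_def.mp hΓfin
      choose n hn using key
      refine ⟨t.sup n, ?_⟩
      rw [mem_conductorIdeal]
      have hgen : ∀ g ∈ t, ((a : A) ^ (t.sup n)) * (g : A) ∈ Λ := by
        intro g hg
        have hle3 : n g ≤ t.sup n := Finset.le_sup hg
        have he : (a : A) ^ (t.sup n) = (a : A) ^ (t.sup n - n g) * (a : A) ^ (n g) := by
          rw [← pow_add, Nat.sub_add_cancel hle3]
        rw [he, mul_assoc]
        exact Λ.mul_mem (pow_mem a.2 _) (hn g)
      intro g hg
      have := mul_mem_of_forall_gen ((a : A) ^ (t.sup n)) t ht hgen g hg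
      have hcast : ((↑(a ^ t.sup n) : A)) = (a : A) ^ (t.sup n) := by push_cast; rfl
      rw [hcast]
      exact this
    have hrad : (conductorIdeal Λ Γ).radical = 𝔓 := by
      refine le_antisymm ?_ hrad_ge
      rw [← hP.radical]
      exact Ideal.radical_mono hIle𝔓
    refine ⟨Ideal.isPrimary_iff.mpr ⟨hInetop, ?_⟩, hrad⟩
    intro α β hαβ
    by_cases hβ : β ∈ 𝔓
    · right
      rw [hrad]
      exact hβ
    · left
      rw [mem_conductorIdeal]
      intro g hg
      by_contra hnot
      have hαgΓ : (α : A) * g ∈ Γ := Γ.mul_mem (hle α.2) hg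
      obtain ⟨b, hb1, hb2⟩ := hprime _ hαgΓ hnot
      have hbαgΓ : (b : A) * ((α : A) * g) ∈ Γ := Γ.mul_mem (hle b.2) hαgΓ
      have heq := huniq _ hbαgΓ hb1 hb2
      apply hβ
      rw [← heq, mem_annMod]
      have he : (β : A) * ((b : A) * ((α : A) * g))
          = (b : A) * ((↑(α * β) : A) * g) := by push_cast; ring
      rw [he]
      exact Λ.mul_mem b.2 (hαβ g hg)
end

section
/- Let Λ be an order of an étale algebra that is Gorenstein at the maximal ideal 𝔓 (i.e., (Λ : 𝔓)/Λ ≅ Λ/𝔓 as Λ/𝔓-modules) and suppose Λ ≠ (𝔓 : 𝔓). Then Γ = (𝔓 : 𝔓) is the unique minimal overorder of Λ with conductor (Λ : Γ) = 𝔓. -/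
/-- Let `Λ` be an order of an étale algebra which is Gorenstein at
the maximal ideal `𝔓` (the `Λ/𝔓`-vector space `(Λ : 𝔓)/Λ` is one-dimensional,
spanned by the class of some `x₀ ∉ Λ`) and suppose `Λ ≠ (𝔓 : 𝔓)`.  Then
`Γ = (𝔓 : 𝔓)` is the unique minimal overorder of `Λ` with conductor
`(Λ : Γ) = 𝔓`. -/
theorem statement19 {R : Type*} {K A : Type u} [CommRing R] [IsDedekindDomain R]
    [Field K] [Algebra R K] [IsFractionRing R K] [CommRing A] [Algebra K A]
    [Algebra R A] [IsScalarTower R K A] [FiniteDimensional K A] [Algebra.Etale K A]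
    (hresfin : ∀ I : Ideal R, I ≠ ⊥ → Finite (R ⧸ I))
    (Λ : Subalgebra R A)
    (hΛfin : Module.Finite R Λ) (hΛspan : Submodule.span K (Λ : Set A) = ⊤)
    (𝔓 : Ideal Λ) (hmax : 𝔓.IsMaximal)
    (hGor : ∃ x₀ : A, (∀ p : Λ, p ∈ 𝔓 → x₀ * (p : A) ∈ Λ) ∧ x₀ ∉ Λ ∧
      ∀ x : A, (∀ p : Λ, p ∈ 𝔓 → x * (p : A) ∈ Λ) →
        ∃ a : Λ, x - (a : A) * x₀ ∈ Λ)
    (hneq : {x : A | ∀ p : Λ, p ∈ 𝔓 → ∃ q : Λ, q ∈ 𝔓 ∧ x * (p : A) = (q : A)}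
      ≠ (Λ : Set A)) :
    ∃ Γ : Subalgebra R A,
      (Γ : Set A) =
        {x : A | ∀ p : Λ, p ∈ 𝔓 → ∃ q : Λ, q ∈ 𝔓 ∧ x * (p : A) = (q : A)} ∧
      ((Module.Finite R Γ ∧ Submodule.span K (Γ : Set A) = ⊤) ∧ Λ < Γ ∧
        (∀ Γ'' : Subalgebra R A,
          (Module.Finite R Γ'' ∧ Submodule.span K (Γ'' : Set A) = ⊤) →
          Λ ≤ Γ'' → Γ'' ≤ Γ → Γ'' = Λ ∨ Γ'' = Γ) ∧
        conductorIdeal Λ Γ = 𝔓) ∧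
      (∀ Γ' : Subalgebra R A,
        ((Module.Finite R Γ' ∧ Submodule.span K (Γ' : Set A) = ⊤) ∧ Λ < Γ' ∧
          (∀ Γ'' : Subalgebra R A,
            (Module.Finite R Γ'' ∧ Submodule.span K (Γ'' : Set A) = ⊤) →
            Λ ≤ Γ'' → Γ'' ≤ Γ' → Γ'' = Λ ∨ Γ'' = Γ') ∧
          conductorIdeal Λ Γ' = 𝔓) → Γ' = Γ) := by
  classical
  obtain ⟨x₀, hx₀P, hx₀n, hx₀span⟩ := hGor
  set S : Set A :=
    {x : A | ∀ p : Λ, p ∈ 𝔓 → ∃ q : Λ, q ∈ 𝔓 ∧ x * (p : A) = (q : A)} with hSdef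
  have hΛS : (Λ : Set A) ⊆ S := by
    intro x hx p hp
    exact ⟨⟨x, hx⟩ * p, 𝔓.mul_mem_left _ hp, rfl⟩
  let Γ : Subalgebra R A :=
    { carrier := S
      one_mem' := hΛS Λ.one_mem
      zero_mem' := hΛS Λ.zero_mem
      mul_mem' := by
        intro x y hx hy p hp
        obtain ⟨q, hq, hyq⟩ := hy p hp
        obtain ⟨r, hr, hxr⟩ := hx q hq
        exact ⟨r, hr, by rw [mul_assoc, hyq, hxr]⟩
      add_mem' := by
        intro x y hx hy p hp
        obtain ⟨q, hq, hxq⟩ := hx p hp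
        obtain ⟨r, hr, hyr⟩ := hy p hp
        exact ⟨q + r, 𝔓.add_mem hq hr, by push_cast; rw [add_mul, hxq, hyr]⟩
      algebraMap_mem' := fun r => hΛS (Λ.algebraMap_mem r) }
  have hΓS : (Γ : Set A) = S := rfl
  have hΛΓ : Λ ≤ Γ := fun x hx => hΛS hx
  have hΛneΓ : Λ ≠ Γ := by
    intro h
    exact hneq (by rw [← hΓS, ← h])
  have hlt : Λ < Γ := lt_of_le_of_ne hΛΓ hΛneΓ
  -- every element of Γ is in (Λ : 𝔓)
  have hΓdual : ∀ x ∈ Γ, ∀ p : Λ, p ∈ 𝔓 → x * (p : A) ∈ Λ := by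
    intro x hx p hp
    obtain ⟨q, _, hq⟩ := hx p hp
    rw [hq]; exact q.2
  -- conductor = 𝔓
  have hcond : conductorIdeal Λ Γ = 𝔓 := by
    have h𝔓le : 𝔓 ≤ conductorIdeal Λ Γ := by
      intro p hp g hg
      obtain ⟨q, _, hq⟩ := hg p hp
      rw [mul_comm, hq]; exact q.2
    have hne : conductorIdeal Λ Γ ≠ ⊤ := by
      intro h
      apply hΛneΓ
      refine le_antisymm hΛΓ ?_
      intro g hg
      have h1 : (1 : Λ) ∈ conductorIdeal Λ Γ := h ▸ Submodule.mem_top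
      have := h1 g hg
      simpa using this
    exact (hmax.eq_of_le hne h𝔓le).symm
  -- minimality
  have hminimal : ∀ Γ'' : Subalgebra R A,
      (Module.Finite R Γ'' ∧ Submodule.span K (Γ'' : Set A) = ⊤) →
      Λ ≤ Γ'' → Γ'' ≤ Γ → Γ'' = Λ ∨ Γ'' = Γ := by
    intro Γ'' _ hle hle2
    by_cases h : Γ'' = Λ
    · exact Or.inl h
    right
    obtain ⟨x, hxΓ, hxΛ⟩ := SetLike.exists_of_lt (lt_of_le_of_ne hle (Ne.symm h))
    obtain ⟨a, haΛ⟩ := hx₀span x (hΓdual x (hle2 hxΓ))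
    have haP : (a : Λ) ∉ 𝔓 := by
      intro hin
      apply hxΛ
      have h1 : x = (x - (a : A) * x₀) + x₀ * (a : A) := by ring
      rw [h1]
      exact Λ.add_mem haΛ (hx₀P a hin)
    obtain ⟨b, p, hp, hbp⟩ := hmax.exists_inv haP
    -- x₀ ∈ Γ''
    have hx₀Γ'' : x₀ ∈ Γ'' := by
      have hcoe : ((b : A)) * (a : A) + (p : A) = 1 := by
        have := congrArg (Subtype.val : Λ → A) hbp
        push_cast at this
        exact this
      have h1 : x₀ = (b : A) * x - (b : A) * (x - (a : A) * x₀) + x₀ * (p : A) := by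
        linear_combination (-x₀) * hcoe
      rw [h1]
      refine Γ''.add_mem (Γ''.sub_mem (Γ''.mul_mem (hle b.2) hxΓ)
        (Γ''.mul_mem (hle b.2) (hle haΛ))) (hle (hx₀P p hp))
    refine le_antisymm hle2 ?_
    intro g hg
    obtain ⟨c, hcΛ⟩ := hx₀span g (hΓdual g hg)
    have h1 : g = (g - (c : A) * x₀) + (c : A) * x₀ := by ring
    rw [h1]
    exact Γ''.add_mem (hle hcΛ) (Γ''.mul_mem (hle c.2) hx₀Γ'')
  -- Γ is an order
  have hΓspan : Submodule.span K (Γ : Set A) = ⊤ := by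
    refine top_unique ?_
    rw [← hΛspan]
    exact Submodule.span_mono hΛΓ
  have hΓfin : Module.Finite R Γ := by
    let M : Submodule R A :=
      Subalgebra.toSubmodule Λ ⊔
        Submodule.map (LinearMap.mulRight R x₀) (Subalgebra.toSubmodule Λ)
    have hΛfg : (Subalgebra.toSubmodule Λ).FG := Module.Finite.iff_fg.mp hΛfin
    have hMfg : M.FG := Submodule.FG.sup hΛfg (Submodule.FG.map _ hΛfg)
    have hΓleM : Subalgebra.toSubmodule Γ ≤ M := by
      intro g hg
      obtain ⟨c, hcΛ⟩ := hx₀span g (hΓdual g hg)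
      have h1 : g = (g - (c : A) * x₀) + (c : A) * x₀ := by ring
      rw [h1]
      refine Submodule.add_mem _ (Submodule.mem_sup_left hcΛ)
        (Submodule.mem_sup_right ?_)
      exact ⟨(c : A), c.2, rfl⟩
    haveI : IsNoetherian R M := isNoetherian_of_fg_of_noetherian M hMfg
    have hcomapfg : ((Subalgebra.toSubmodule Γ).comap M.subtype).FG :=
      IsNoetherian.noetherian _
    have heq : ((Subalgebra.toSubmodule Γ).comap M.subtype).map M.subtype
        = Subalgebra.toSubmodule Γ := by
      rw [Submodule.map_comap_subtype]
      exact inf_eq_right.mpr hΓleM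
    have : (Subalgebra.toSubmodule Γ).FG := heq ▸ hcomapfg.map _
    exact Module.Finite.iff_fg.mpr this
  refine ⟨Γ, rfl, ⟨⟨hΓfin, hΓspan⟩, hlt, hminimal, hcond⟩, ?_⟩
  -- uniqueness
  rintro Γ' ⟨⟨hfin', hspan'⟩, hlt', _, hcond'⟩
  have hΓ'leΓ : Γ' ≤ Γ := by
    intro g hg p hp
    have hp' : (p : Λ) ∈ conductorIdeal Λ Γ' := hcond' ▸ hp
    have hgp : g * (p : A) ∈ Λ := by
      have := hp' g hg
      rwa [mul_comm]
    refine ⟨⟨g * (p : A), hgp⟩, ?_, rfl⟩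
    rw [← hcond']
    intro h hh
    have h1 : (g * (p : A)) * h = (p : A) * (g * h) := by ring
    show ((⟨g * (p : A), hgp⟩ : Λ) : A) * h ∈ Λ
    rw [h1]
    exact hp' (g * h) (Γ'.mul_mem hg hh)
  rcases hminimal Γ' ⟨hfin', hspan'⟩ hlt'.le hΓ'leΓ with h | h
  · exact absurd h hlt'.ne'
  · exact h
end
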